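/- Suppose (f_n) is a sequence of increasing convex real-valued functions on [0,1) such that lim_{n→∞} f_n(x) exists (in ℝ) for all x ∈ (0,1). Then lim_{n→∞} f_n(0) also exists, the pointwise limit f: [0,1) → ℝ is convex and increasing, and f_n → f uniformly on [0,w] for every w ∈ [0,1). -/

import Mathlib

open Filter

/-- Lemma S10 of the paper: a pointwise-on-(0,1) convergent sequence of
increasing convex functions on [0,1) also converges at 0; the limit is convex
and increasing, and the convergence is uniform on every `[0, w] ⊆ [0, 1)`. -/
theorem stmt9 (f : ℕ → ℝ → ℝ)
    (hmono : ∀ n, MonotoneOn (f n) (Set.Ico (0 : ℝ) 1))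
    (hconv : ∀ n, ConvexOn ℝ (Set.Ico (0 : ℝ) 1) (f n))
    (hlim : ∀ x ∈ Set.Ioo (0 : ℝ) 1, ∃ L : ℝ, Tendsto (fun n => f n x) atTop (nhds L)) :
    ∃ g : ℝ → ℝ,
      (∀ x ∈ Set.Ico (0 : ℝ) 1, Tendsto (fun n => f n x) atTop (nhds (g x))) ∧
      MonotoneOn g (Set.Ico (0 : ℝ) 1) ∧
      ConvexOn ℝ (Set.Ico (0 : ℝ) 1) g ∧
      ∀ w ∈ Set.Ico (0 : ℝ) 1, TendstoUniformlyOn (fun n => f n) g atTop (Set.Icc 0 w) := by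
  classical
  have hsub : Set.Ioo (0:ℝ) 1 ⊆ Set.Ico 0 1 := Set.Ioo_subset_Ico_self
  set h : ℝ → ℝ := fun x => limUnder atTop (fun n => f n x) with hdef
  have ht : ∀ x ∈ Set.Ioo (0:ℝ) 1, Tendsto (fun n => f n x) atTop (nhds (h x)) :=
    fun x hx => tendsto_nhds_limUnder (hlim x hx)
  clear_value h
  have q4 : (1/4 : ℝ) ∈ Set.Ioo (0:ℝ) 1 := by norm_num
  have q2 : (1/2 : ℝ) ∈ Set.Ioo (0:ℝ) 1 := by norm_num
  have h0mem : (0:ℝ) ∈ Set.Ico (0:ℝ) 1 := ⟨le_refl _, one_pos⟩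
  have hmono_h : ∀ x ∈ Set.Ioo (0:ℝ) 1, ∀ y ∈ Set.Ioo (0:ℝ) 1, x ≤ y → h x ≤ h y :=
    fun x hx y hy hxy => le_of_tendsto_of_tendsto' (ht x hx) (ht y hy)
      (fun n => hmono n (hsub hx) (hsub hy) hxy)
  -- lower bound for h
  have hlb : ∀ x ∈ Set.Ioo (0:ℝ) 1, 2 * h (1/4) - h (1/2) ≤ h x := by
    intro x hx
    rcases le_or_gt (1/4 : ℝ) x with hc | hc
    · have h1 := hmono_h _ q4 _ hx hc
      have h24 := hmono_h _ q4 _ q2 (by norm_num)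
      linarith
    · have key : ∀ n, 2 * f n (1/4) - f n (1/2) ≤ f n x := by
        intro n
        have hs := (hconv n).slope_mono_adjacent (hsub hx) (hsub q2) hc (by norm_num)
        have h1 : (0:ℝ) < 1/4 - x := by linarith
        have h3 : f n (1/4) ≤ f n (1/2) := hmono n (hsub q4) (hsub q2) (by norm_num)
        rw [div_le_div_iff₀ h1 (by norm_num)] at hs
        nlinarith [mul_nonneg (sub_nonneg.2 h3) hx.1.le]
      exact le_of_tendsto_of_tendsto'
        (((ht _ q4).const_mul 2).sub (ht _ q2)) (ht x hx) key
  have hne : (h '' Set.Ioo 0 1).Nonempty := ⟨h (1/2), Set.mem_image_of_mem _ q2⟩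
  have hbdd : BddBelow (h '' Set.Ioo 0 1) := by
    refine ⟨2 * h (1/4) - h (1/2), ?_⟩
    rintro y ⟨x, hx, rfl⟩
    exact hlb x hx
  set g0 := sInf (h '' Set.Ioo 0 1) with hg0
  have hg0le : ∀ x ∈ Set.Ioo (0:ℝ) 1, g0 ≤ h x :=
    fun x hx => csInf_le hbdd (Set.mem_image_of_mem _ hx)
  -- convergence at 0
  have h0 : Tendsto (fun n => f n 0) atTop (nhds g0) := by
    rw [tendsto_order]
    constructor
    · intro b hb
      set ε := g0 - b with hεd
      have hεpos : 0 < ε := sub_pos.2 hb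
      set C := h (1/2) - g0 with hCd
      have hCnn : 0 ≤ C := sub_nonneg.2 (hg0le _ q2)
      set x := min (1/4 : ℝ) (ε/(4*C+4)) with hxd
      have hx0 : 0 < x := lt_min (by norm_num) (div_pos hεpos (by linarith))
      have hx4 : x ≤ 1/4 := min_le_left _ _
      have h1x : x ≤ ε/(4*C+4) := min_le_right _ _
      clear_value x C ε
      have hxmem : x ∈ Set.Ioo (0:ℝ) 1 := ⟨hx0, by linarith⟩
      have hxe : 2 * x * C < ε / 2 := by
        have h2 : (0:ℝ) < 4*C+4 := by linarith
        rw [le_div_iff₀ h2] at h1x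
        nlinarith
      -- per-n convexity inequality
      have hineq : ∀ n, f n x - 2*x * f n (1/2) ≤ (1-2*x) * f n 0 := by
        intro n
        have hcc := (hconv n).2 h0mem (hsub q2)
          (show (0:ℝ) ≤ 1-2*x by linarith) (show (0:ℝ) ≤ 2*x by linarith)
          (show (1-2*x) + 2*x = 1 by ring)
        have harg : (1-2*x) • (0:ℝ) + (2*x) • (1/2 : ℝ) = x := by
          rw [smul_eq_mul, smul_eq_mul]; ring
        rw [harg, smul_eq_mul, smul_eq_mul] at hcc
        linarith
      have hBgt : b * (1-2*x) < h x - 2*x * h (1/2) := by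
        have h1 : g0 ≤ h x := hg0le _ hxmem
        have h2 : h (1/2) = g0 + C := by rw [hCd]; ring
        have hxε : x * ε = x*g0 - x*b := by rw [hεd]; ring
        nlinarith [mul_nonneg (show (0:ℝ) ≤ 1/4 - x by linarith) hεpos.le]
      have hev : ∀ᶠ n in atTop, b * (1-2*x) < f n x - 2*x * f n (1/2) :=
        Tendsto.eventually_const_lt hBgt
          (((ht x hxmem)).sub ((ht _ q2).const_mul (2*x)))
      refine hev.mono fun n hn => ?_
      have h2 : b * (1-2*x) < f n 0 * (1-2*x) := by
        have := lt_of_lt_of_le hn (hineq n)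
        nlinarith
      exact lt_of_mul_lt_mul_right h2 (by linarith)
    · intro b hb
      obtain ⟨_, ⟨x, hxm, rfl⟩, hxb⟩ := exists_lt_of_csInf_lt hne hb
      exact ((ht x hxm).eventually_lt_const hxb).mono fun n hn =>
        lt_of_le_of_lt (hmono n h0mem (hsub hxm) hxm.1.le) hn
  clear_value g0
  -- the limit function
  set g : ℝ → ℝ := fun x => if x = 0 then g0 else h x with hgdef
  have hgt : ∀ x ∈ Set.Ico (0:ℝ) 1, Tendsto (fun n => f n x) atTop (nhds (g x)) := by
    intro x hx
    rcases eq_or_lt_of_le hx.1 with h0x | h0x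
    · have hx0 : x = 0 := h0x.symm
      subst hx0
      rw [hgdef]
      simpa using h0
    · rw [hgdef]
      have hne0 : x ≠ 0 := ne_of_gt h0x
      simpa [hne0] using ht x ⟨h0x, hx.2⟩
  clear_value g
  have gmono : MonotoneOn g (Set.Ico (0:ℝ) 1) := fun x hx y hy hxy =>
    le_of_tendsto_of_tendsto' (hgt x hx) (hgt y hy) fun n => hmono n hx hy hxy
  have gconv : ConvexOn ℝ (Set.Ico (0:ℝ) 1) g := by
    refine ⟨convex_Ico _ _, fun x hx y hy a b ha hb hab => ?_⟩
    have hxy : a • x + b • y ∈ Set.Ico (0:ℝ) 1 := (convex_Ico (0:ℝ) 1) hx hy ha hb hab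
    simp only [smul_eq_mul] at hxy ⊢
    refine le_of_tendsto_of_tendsto' (hgt _ hxy)
      (((hgt x hx).const_mul a).add ((hgt y hy).const_mul b)) fun n => ?_
    simpa [smul_eq_mul] using (hconv n).2 hx hy ha hb hab
  refine ⟨g, hgt, gmono, gconv, ?_⟩
  -- uniform convergence
  intro w hw
  set c := (1+w)/2 with hcd
  have hwc : w < c := by rw [hcd]; linarith [hw.2]
  have hc1 : c < 1 := by rw [hcd]; linarith [hw.2]
  have hcmem : c ∈ Set.Ico (0:ℝ) 1 := ⟨by rw [hcd]; linarith [hw.1], hc1⟩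
  have hsub2 : Set.Icc (0:ℝ) w ⊆ Set.Ico 0 1 := fun z hz => ⟨hz.1, lt_of_le_of_lt hz.2 hw.2⟩
  set K := (g c - g 0)/(c - w) with hKd
  have hK0 : 0 ≤ K := div_nonneg
    (sub_nonneg.2 (gmono h0mem hcmem (by rw [hcd]; linarith [hw.1]))) (by linarith)
  clear_value c K
  have hlip : ∀ x y : ℝ, 0 ≤ x → x ≤ y → y ≤ w → g y - g x ≤ K * (y - x) := by
    intro x y hx0 hxy hyw
    rcases eq_or_lt_of_le hxy with rfl | hlt
    · simp
    · have hxc : x < c := lt_of_le_of_lt (hxy.trans hyw) hwc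
      have hxmem : x ∈ Set.Ico (0:ℝ) 1 := ⟨hx0, by linarith⟩
      have hcx : (0:ℝ) < c - x := by linarith
      have ha : 0 ≤ (c-y)/(c-x) := div_nonneg (by linarith) hcx.le
      have hb : 0 ≤ (y-x)/(c-x) := div_nonneg (by linarith) hcx.le
      have hab : (c-y)/(c-x) + (y-x)/(c-x) = 1 := by field_simp; ring
      have hcc := gconv.2 hxmem hcmem ha hb hab
      have harg : ((c-y)/(c-x)) • x + ((y-x)/(c-x)) • c = y := by
        rw [smul_eq_mul, smul_eq_mul]; field_simp; ring
      rw [harg, smul_eq_mul, smul_eq_mul] at hcc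
      have hba : (c-y)/(c-x) = 1 - (y-x)/(c-x) := by linarith
      rw [hba] at hcc
      -- g y - g x ≤ ((y-x)/(c-x)) * (g c - g x)
      have step1 : g y - g x ≤ ((y-x)/(c-x)) * (g c - g x) := by nlinarith
      have hgx0 : g 0 ≤ g x := gmono h0mem hxmem hx0
      have hgxc : g x ≤ g c := gmono hxmem hcmem hxc.le
      have step2 : (y-x)/(c-x) ≤ (y-x)/(c-w) := by
        gcongr <;> linarith
      calc g y - g x ≤ ((y-x)/(c-x)) * (g c - g x) := step1
        _ ≤ ((y-x)/(c-w)) * (g c - g 0) := by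
            apply mul_le_mul step2 (by linarith) (by linarith) (div_nonneg (by linarith) (by linarith))
        _ = K * (y - x) := by rw [hKd]; ring
  rw [← tendstoLocallyUniformlyOn_iff_tendstoUniformlyOn_of_compact isCompact_Icc]
  rw [Metric.tendstoLocallyUniformlyOn_iff]
  intro ε hε t htmem
  set δ := ε/(6*(K+1)) with hδd
  have hδpos : 0 < δ := by positivity
  clear_value δ
  set A := max 0 (t - δ) with hAd
  set B := min w (t + δ) with hBd
  have hAt : A ≤ t := max_le htmem.1 (by linarith)
  have htB : t ≤ B := le_min htmem.2 (by linarith)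
  have hA0 : 0 ≤ A := le_max_left _ _
  have hAw : A ≤ w := max_le hw.1 (by linarith [htmem.2])
  have hB0 : 0 ≤ B := le_trans (le_trans hA0 hAt) htB
  have hBw : B ≤ w := min_le_left _ _
  have hBA : B - A ≤ 2*δ := by
    have h1 : t - δ ≤ A := le_max_right _ _
    have h2 : B ≤ t + δ := min_le_right _ _
    linarith
  have hAmem : A ∈ Set.Icc (0:ℝ) w := ⟨hA0, hAw⟩
  have hBmem : B ∈ Set.Icc (0:ℝ) w := ⟨hB0, hBw⟩
  have hgBA : g B - g A ≤ ε/3 := by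
    have h1 : g B - g A ≤ K * (B - A) := hlip A B hA0 (hAt.trans htB) hBw
    have h2 : K * (B - A) ≤ K * (2*δ) := mul_le_mul_of_nonneg_left hBA hK0
    have h3 : K * (2*δ) ≤ ε/3 := by
      have hK1 : (0:ℝ) < K + 1 := by linarith
      rw [hδd, show K * (2*(ε/(6*(K+1)))) = (K*ε)/(3*(K+1)) by field_simp; ring,
        div_le_div_iff₀ (by linarith) (by norm_num)]
      nlinarith [mul_nonneg hK0 hε.le]
    linarith
  refine ⟨Set.Icc A B, ?_, ?_⟩
  · refine Filter.mem_of_superset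
      (inter_mem_nhdsWithin _ (Metric.ball_mem_nhds t hδpos)) ?_
    rintro y ⟨hy1, hy2⟩
    rw [Metric.mem_ball, Real.dist_eq, abs_sub_lt_iff] at hy2
    exact ⟨max_le hy1.1 (by linarith), le_min hy1.2 (by linarith)⟩
  · have e1 := (Metric.tendsto_nhds.mp (hgt A (hsub2 hAmem))) (ε/3) (by positivity)
    have e2 := (Metric.tendsto_nhds.mp (hgt B (hsub2 hBmem))) (ε/3) (by positivity)
    refine (e1.and e2).mono fun n hn y hy => ?_
    obtain ⟨h1, h2⟩ := hn
    rw [Real.dist_eq, abs_sub_lt_iff] at h1 h2 ⊢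
    have hymem : y ∈ Set.Icc (0:ℝ) w := ⟨le_trans hA0 hy.1, le_trans hy.2 hBw⟩
    have m1 : f n A ≤ f n y := hmono n (hsub2 hAmem) (hsub2 hymem) hy.1
    have m2 : f n y ≤ f n B := hmono n (hsub2 hymem) (hsub2 hBmem) hy.2
    have m3 : g A ≤ g y := gmono (hsub2 hAmem) (hsub2 hymem) hy.1
    have m4 : g y ≤ g B := gmono (hsub2 hymem) (hsub2 hBmem) hy.2
    constructor <;> linarith [h1.1, h1.2, h2.1, h2.2, hgBA]
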